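/- Let n ≥ 1, let R : ℂⁿ × ℂⁿ × ℂⁿ × ℂⁿ → ℂ be a curvature-type form, let (e₁, …, eₙ) be an orthonormal basis of ℂⁿ, and let b₁, …, bₙ be nonnegative real numbers. Let S be the unit sphere of ℂⁿ with uniform probability measure σ, and for w ∈ S set v_b(w) := Σ_{i=1}^{n} b_i w_i e_i. Then ∫_S R( v_b(w), v_b(w), v_b(w), v_b(w) ) dσ(w) = (1/(n(n+1))) · Σ_{i,k=1}^{n} ( R(e_i, e_i, e_k, e_k) + R(e_i, e_k, e_k, e_i) ) b_i² b_k². -/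

import Mathlib

open scoped ComplexConjugate BigOperators

/-- A curvature-type form on `ℂⁿ`: ℂ-linear in the 1st and 3rd arguments and
conjugate-linear (additive, with `R(…, c•X, …) = conj c * R(…, X, …)`) in the
2nd and 4th arguments. -/
structure CurvatureForm (n : ℕ) where
  R : EuclideanSpace ℂ (Fin n) → EuclideanSpace ℂ (Fin n) → EuclideanSpace ℂ (Fin n) →
      EuclideanSpace ℂ (Fin n) → ℂ
  add_fst : ∀ X X' Y Z W, R (X + X') Y Z W = R X Y Z W + R X' Y Z W
  smul_fst : ∀ (c : ℂ) (X Y Z W), R (c • X) Y Z W = c * R X Y Z W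
  add_snd : ∀ X Y Y' Z W, R X (Y + Y') Z W = R X Y Z W + R X Y' Z W
  smul_snd : ∀ (c : ℂ) (X Y Z W), R X (c • Y) Z W = conj c * R X Y Z W
  add_trd : ∀ X Y Z Z' W, R X Y (Z + Z') W = R X Y Z W + R X Y Z' W
  smul_trd : ∀ (c : ℂ) (X Y Z W), R X Y (c • Z) W = c * R X Y Z W
  add_fth : ∀ X Y Z W W', R X Y Z (W + W') = R X Y Z W + R X Y Z W'
  smul_fth : ∀ (c : ℂ) (X Y Z W), R X Y Z (c • W) = conj c * R X Y Z W

open MeasureTheory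

noncomputable instance (n : ℕ) : MeasurableSpace (EuclideanSpace ℂ (Fin n)) :=
  MeasurableSpace.comap WithLp.ofLp MeasurableSpace.pi
instance (n : ℕ) : BorelSpace (EuclideanSpace ℂ (Fin n)) :=
  PiLp.borelSpace (ι := Fin n) (X := fun _ => ℂ) 2

namespace Stmt4Aux

variable {n : ℕ}

noncomputable def diagU (c : Fin n → ℂ) (hc : ∀ i, ‖c i‖ = 1) :
    EuclideanSpace ℂ (Fin n) ≃ₗᵢ[ℂ] EuclideanSpace ℂ (Fin n) where
  toFun w := WithLp.toLp 2 fun i => c i * w i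
  invFun w := WithLp.toLp 2 fun i => (c i)⁻¹ * w i
  left_inv w := by
    ext i
    have h : c i ≠ 0 := fun h => by simpa [h] using hc i
    simp [h]
  right_inv w := by
    ext i
    have h : c i ≠ 0 := fun h => by simpa [h] using hc i
    simp [h]
  map_add' x y := by
    ext i
    simp [PiLp.add_apply, mul_add]
  map_smul' m x := by
    ext i
    simp [PiLp.smul_apply, smul_eq_mul]; ring
  norm_map' w := by
    rw [EuclideanSpace.norm_eq, EuclideanSpace.norm_eq]
    congr 1
    exact Finset.sum_congr rfl fun i _ => by show ‖c i * w i‖ ^ 2 = _; rw [norm_mul, hc, one_mul]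

lemma diagU_apply (c : Fin n → ℂ) (hc) (w : EuclideanSpace ℂ (Fin n)) (i : Fin n) :
    diagU c hc w i = c i * w i := rfl


noncomputable def rotFun (a b : Fin n) (w : EuclideanSpace ℂ (Fin n)) :
    EuclideanSpace ℂ (Fin n) :=
  WithLp.toLp 2 fun t => if t = a then (w a + w b) / (Real.sqrt 2 : ℂ)
    else if t = b then (w a - w b) / (Real.sqrt 2 : ℂ) else w t

lemma sqrt2_ne : ((Real.sqrt 2 : ℝ) : ℂ) ≠ 0 := by
  simpa [Complex.ofReal_ne_zero] using (Real.sqrt_ne_zero' .mpr (by norm_num : (0:ℝ) < 2))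

lemma sqrt2_sq : ((Real.sqrt 2 : ℝ) : ℂ) * ((Real.sqrt 2 : ℝ) : ℂ) = 2 := by
  rw [← Complex.ofReal_mul, Real.mul_self_sqrt (by norm_num)]
  norm_num

lemma rotFun_invol (a b : Fin n) (hab : a ≠ b) (w : EuclideanSpace ℂ (Fin n)) :
    rotFun a b (rotFun a b w) = w := by
  ext t
  unfold rotFun
  by_cases ha : t = a
  · subst ha
    simp [hab, if_neg (Ne.symm hab)]
    field_simp
    rw [mul_comm]
    rw [sq, sqrt2_sq]
    ring
  · by_cases hbt : t = b
    · subst hbt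
      simp [hab, if_neg (Ne.symm hab), if_neg ha]
      field_simp
      rw [mul_comm, sq, sqrt2_sq]
      ring
    · simp [ha, hbt]

lemma norm_sq_complex (z : ℂ) : ‖z‖ ^ 2 = z.re ^ 2 + z.im ^ 2 := by
  rw [Complex.sq_norm, Complex.normSq_apply]
  ring

lemma rotFun_norm (a b : Fin n) (hab : a ≠ b) (w : EuclideanSpace ℂ (Fin n)) :
    ‖rotFun a b w‖ = ‖w‖ := by
  rw [EuclideanSpace.norm_eq, EuclideanSpace.norm_eq]
  congr 1
  have key : ∀ g : Fin n → ℝ,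
      ∑ t, g t = ∑ t ∈ Finset.univ \ {a, b}, g t + (g a + g b) := by
    intro g
    rw [← Finset.sum_sdiff (Finset.subset_univ {a, b}), Finset.sum_pair hab]
  rw [key (fun t => ‖rotFun a b w t‖ ^ 2), key (fun t => ‖w t‖ ^ 2)]
  have h1 : ∀ t ∈ Finset.univ \ ({a, b} : Finset (Fin n)),
      ‖rotFun a b w t‖ ^ 2 = ‖w t‖ ^ 2 := by
    intro t ht
    simp only [Finset.mem_sdiff, Finset.mem_insert, Finset.mem_singleton, not_or] at ht
    simp [rotFun, ht.2.1, ht.2.2]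
  rw [Finset.sum_congr rfl h1]
  congr 1
  have ea : rotFun a b w a = (w a + w b) / (Real.sqrt 2 : ℂ) := by simp [rotFun]
  have eb : rotFun a b w b = (w a - w b) / (Real.sqrt 2 : ℂ) := by
    simp [rotFun, Ne.symm hab]
  rw [ea, eb]
  have h2 : ‖((Real.sqrt 2 : ℝ) : ℂ)‖ = Real.sqrt 2 := by
    rw [Complex.norm_real, Real.norm_eq_abs, abs_of_nonneg (Real.sqrt_nonneg 2)]
  rw [norm_div, norm_div, h2, div_pow, div_pow, Real.sq_sqrt (by norm_num : (0:ℝ) ≤ 2)]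
  rw [norm_sq_complex (w a + w b), norm_sq_complex (w a - w b),
    norm_sq_complex (w a), norm_sq_complex (w b)]
  simp only [Complex.add_re, Complex.add_im, Complex.sub_re, Complex.sub_im]
  ring

noncomputable def rotU (a b : Fin n) (hab : a ≠ b) :
    EuclideanSpace ℂ (Fin n) ≃ₗᵢ[ℂ] EuclideanSpace ℂ (Fin n) where
  toFun := rotFun a b
  invFun := rotFun a b
  left_inv := rotFun_invol a b hab
  right_inv := rotFun_invol a b hab
  map_add' x y := by
    ext t
    show rotFun a b (x + y) t = rotFun a b x t + rotFun a b y t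
    unfold rotFun
    by_cases ha : t = a
    · simp [ha, PiLp.add_apply]; ring
    · by_cases hbt : t = b
      · simp [ha, hbt, if_neg (hbt ▸ ha : ¬ t = a), PiLp.add_apply, Ne.symm hab]; ring
      · simp [ha, hbt, PiLp.add_apply]
  map_smul' m x := by
    ext t
    show rotFun a b (m • x) t = m * rotFun a b x t
    unfold rotFun
    by_cases ha : t = a
    · simp [ha, PiLp.smul_apply, smul_eq_mul]; ring
    · by_cases hbt : t = b
      · simp [ha, hbt, PiLp.smul_apply, smul_eq_mul, Ne.symm hab]; ring
      · simp [ha, hbt, PiLp.smul_apply, smul_eq_mul]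
  norm_map' := rotFun_norm a b hab


lemma rotU_coord_a (a b : Fin n) (hab : a ≠ b) (w : EuclideanSpace ℂ (Fin n)) :
    (rotU a b hab w) a = (w a + w b) / ((Real.sqrt 2 : ℝ) : ℂ) := by
  show rotFun a b w a = _
  simp only [rotFun, if_pos rfl]
  rw [if_pos trivial]

lemma cont_coord (i : Fin n) : Continuous fun w : EuclideanSpace ℂ (Fin n) => w i :=
  (EuclideanSpace.proj (𝕜 := ℂ) i).continuous

lemma coord_norm_le (w : EuclideanSpace ℂ (Fin n)) (i : Fin n) : ‖w i‖ ≤ ‖w‖ := by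
  rw [EuclideanSpace.norm_eq]
  rw [show ‖w i‖ = Real.sqrt (‖w i‖ ^ 2) from (Real.sqrt_sq (norm_nonneg _)).symm]
  apply Real.sqrt_le_sqrt
  exact Finset.single_le_sum (fun t _ => sq_nonneg ‖w t‖) (Finset.mem_univ i)

noncomputable def Mom (σ : Measure (EuclideanSpace ℂ (Fin n)))
    (i j k l : Fin n) : ℂ :=
  ∫ w, w i * conj (w j) * (w k * conj (w l)) ∂σ

lemma mono_cont (i j k l : Fin n) :
    Continuous fun w : EuclideanSpace ℂ (Fin n) => w i * conj (w j) * (w k * conj (w l)) := by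
  have hc : ∀ t : Fin n, Continuous fun w : EuclideanSpace ℂ (Fin n) => conj (w t) :=
    fun t => Complex.continuous_conj.comp (cont_coord t)
  exact (((cont_coord i).mul (hc j)).mul ((cont_coord k).mul (hc l)))

variable {σ : Measure (EuclideanSpace ℂ (Fin n))} [IsProbabilityMeasure σ]

lemma ae_norm_one (hsphere : σ (Metric.sphere (0 : EuclideanSpace ℂ (Fin n)) 1) = 1) :
    ∀ᵐ w ∂σ, ‖w‖ = 1 := by
  have hms : MeasurableSet (Metric.sphere (0 : EuclideanSpace ℂ (Fin n)) 1) :=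
    Metric.isClosed_sphere.measurableSet
  have h0 : σ (Metric.sphere (0 : EuclideanSpace ℂ (Fin n)) 1)ᶜ = 0 := by
    rw [measure_compl hms (measure_ne_top σ _), hsphere, measure_univ]
    simp
  rw [MeasureTheory.ae_iff]
  convert h0 using 2
  ext w
  simp [mem_sphere_zero_iff_norm]

lemma mono_integrable (hsphere : σ (Metric.sphere (0 : EuclideanSpace ℂ (Fin n)) 1) = 1)
    (i j k l : Fin n) :
    Integrable (fun w : EuclideanSpace ℂ (Fin n) =>
      w i * conj (w j) * (w k * conj (w l))) σ := by
  refine Integrable.mono' (integrable_const (1 : ℝ))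
    (mono_cont i j k l).aestronglyMeasurable ?_
  filter_upwards [ae_norm_one hsphere] with w hw
  have hb : ∀ t : Fin n, ‖w t‖ ≤ 1 := fun t => hw ▸ coord_norm_le w t
  have hb' : ∀ t : Fin n, ‖conj (w t)‖ ≤ 1 := fun t => by
    rw [RCLike.norm_conj]; exact hb t
  rw [norm_mul, norm_mul, norm_mul]
  have h1 : ‖w i‖ * ‖conj (w j)‖ ≤ 1 :=
    mul_le_one₀ (hb i) (norm_nonneg _) (hb' j)
  have h2 : ‖w k‖ * ‖conj (w l)‖ ≤ 1 :=
    mul_le_one₀ (hb k) (norm_nonneg _) (hb' l)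
  exact mul_le_one₀ h1 (mul_nonneg (norm_nonneg _) (norm_nonneg _)) h2

lemma int_map (hinv : ∀ U : EuclideanSpace ℂ (Fin n) ≃ₗᵢ[ℂ] EuclideanSpace ℂ (Fin n),
      σ.map U = σ)
    (U : EuclideanSpace ℂ (Fin n) ≃ₗᵢ[ℂ] EuclideanSpace ℂ (Fin n))
    (f : EuclideanSpace ℂ (Fin n) → ℂ) (hf : Continuous f) :
    ∫ w, f (U w) ∂σ = ∫ w, f w ∂σ := by
  conv_rhs => rw [← hinv U]
  rw [integral_map U.continuous.aemeasurable]
  rw [hinv U]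
  exact hf.aestronglyMeasurable


lemma diagU_coord (c : Fin n → ℂ) (hc : ∀ i, ‖c i‖ = 1)
    (w : EuclideanSpace ℂ (Fin n)) (t : Fin n) : (diagU c hc w) t = c t * w t := rfl

lemma mom_diag (hinv : ∀ U : EuclideanSpace ℂ (Fin n) ≃ₗᵢ[ℂ] EuclideanSpace ℂ (Fin n),
      σ.map U = σ) (m i j k l : Fin n) :
    Mom σ i j k l =
      ((if i = m then Complex.I else 1) * conj (if j = m then Complex.I else 1) *
        ((if k = m then Complex.I else 1) * conj (if l = m then Complex.I else 1))) *
      Mom σ i j k l := by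
  classical
  set c : Fin n → ℂ := fun t => if t = m then Complex.I else 1 with hcdef
  have hc1 : ∀ t, ‖c t‖ = 1 := by
    intro t; by_cases h : t = m <;> simp [hcdef, h]
  set U := diagU c hc1 with hU
  have h1 : ∫ w, (fun w : EuclideanSpace ℂ (Fin n) =>
      w i * conj (w j) * (w k * conj (w l))) (U w) ∂σ = Mom σ i j k l :=
    int_map hinv U _ (mono_cont i j k l)
  have h2 : ∀ w : EuclideanSpace ℂ (Fin n),
      (U w) i * conj ((U w) j) * ((U w) k * conj ((U w) l)) =
      (c i * conj (c j) * (c k * conj (c l))) *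
        (w i * conj (w j) * (w k * conj (w l))) := by
    intro w
    rw [diagU_coord c hc1 w, diagU_coord c hc1 w, diagU_coord c hc1 w, diagU_coord c hc1 w, map_mul, map_mul]
    ring
  have key : Mom σ i j k l =
      ∫ w, (c i * conj (c j) * (c k * conj (c l))) *
        (w i * conj (w j) * (w k * conj (w l))) ∂σ := by
    rw [← h1]
    exact integral_congr_ae (Filter.Eventually.of_forall fun w => h2 w)
  have hcc : (if i = m then Complex.I else 1) * conj (if j = m then Complex.I else 1) *
      ((if k = m then Complex.I else 1) * conj (if l = m then Complex.I else 1)) =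
      c i * conj (c j) * (c k * conj (c l)) := rfl
  rw [hcc]
  calc Mom σ i j k l = _ := key
    _ = c i * conj (c j) * (c k * conj (c l)) * Mom σ i j k l := integral_const_mul _ _

lemma mom_vanish (hinv : ∀ U : EuclideanSpace ℂ (Fin n) ≃ₗᵢ[ℂ] EuclideanSpace ℂ (Fin n),
      σ.map U = σ) {i j k l : Fin n}
    (h : ¬((i = j ∧ k = l) ∨ (i = l ∧ k = j))) : Mom σ i j k l = 0 := by
  classical
  obtain ⟨m, hfact⟩ : ∃ m : Fin n,
      ((if i = m then Complex.I else 1) * conj (if j = m then Complex.I else 1) *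
        ((if k = m then Complex.I else 1) * conj (if l = m then Complex.I else 1))) ≠ 1 := by
    by_cases hj : j = i
    · have hkl : ¬ k = l := fun hkl => h (Or.inl ⟨hj.symm, hkl⟩)
      have hlk : ¬ l = k := fun hlk => hkl hlk.symm
      refine ⟨k, ?_⟩
      by_cases hik : i = k
      · simp only [hik, hj, if_pos rfl, if_neg hlk, Complex.conj_I, map_one]
        norm_num [Complex.ext_iff]
      · simp only [hj, if_neg hik, if_pos rfl, if_neg hlk, map_one, one_mul, mul_one]
        norm_num [Complex.ext_iff]
    · by_cases hl : l = i
      · have hkj : ¬ k = j := fun hkj => h (Or.inr ⟨hl.symm, hkj⟩)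
        have hjk : ¬ j = k := fun hjk => hkj hjk.symm
        refine ⟨k, ?_⟩
        by_cases hik : i = k
        · simp only [hik, hl, if_pos rfl, if_neg hjk, Complex.conj_I, map_one]
          norm_num [Complex.ext_iff]
        · simp only [hl, if_neg hik, if_pos rfl, if_neg hjk, map_one, one_mul, mul_one]
          norm_num [Complex.ext_iff]
      · refine ⟨i, ?_⟩
        simp only [if_pos rfl, if_neg hj, if_neg hl, map_one, mul_one, one_mul]
        by_cases hki : k = i
        · simp only [hki, if_pos rfl, Complex.I_mul_I]
          norm_num [Complex.ext_iff]
        · simp only [if_neg hki, mul_one]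
          norm_num [Complex.ext_iff]
  have hd := mom_diag (σ := σ) hinv m i j k l
  have hz : ((1 : ℂ) -
      ((if i = m then Complex.I else 1) * conj (if j = m then Complex.I else 1) *
        ((if k = m then Complex.I else 1) * conj (if l = m then Complex.I else 1)))) *
      Mom σ i j k l = 0 := by linear_combination hd
  rcases mul_eq_zero.mp hz with h0 | h0
  · exact absurd (by linear_combination -h0) hfact
  · exact h0


lemma mom_perm1 (i k : Fin n) : Mom σ i k k i = Mom σ i i k k :=
  integral_congr_ae (Filter.Eventually.of_forall fun w => by ring)

lemma mom_perm2 (i k : Fin n) : Mom σ k k i i = Mom σ i i k k :=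
  integral_congr_ae (Filter.Eventually.of_forall fun w => by ring)

lemma mom_sum_int (hsphere : σ (Metric.sphere (0 : EuclideanSpace ℂ (Fin n)) 1) = 1)
    (s : Finset (Fin n))
    (F : Fin n → EuclideanSpace ℂ (Fin n) → ℂ)
    (hF : ∀ x ∈ s, Integrable (F x) σ) :
    ∫ w, ∑ x ∈ s, F x w ∂σ = ∑ x ∈ s, ∫ w, F x w ∂σ :=
  integral_finset_sum s hF

lemma mom_rot (hinv : ∀ U : EuclideanSpace ℂ (Fin n) ≃ₗᵢ[ℂ] EuclideanSpace ℂ (Fin n),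
      σ.map U = σ)
    (hsphere : σ (Metric.sphere (0 : EuclideanSpace ℂ (Fin n)) 1) = 1)
    (a b : Fin n) (hab : a ≠ b) :
    Mom σ a a a a =
      (1/4 : ℂ) * (Mom σ a a a a + Mom σ b b b b + 4 * Mom σ a a b b) := by
  classical
  set U := rotU a b hab with hU
  have h1 : ∫ w, (fun w : EuclideanSpace ℂ (Fin n) =>
      w a * conj (w a) * (w a * conj (w a))) (U w) ∂σ = Mom σ a a a a :=
    int_map hinv U _ (mono_cont a a a a)
  -- pointwise expansion
  have h2 : ∀ w : EuclideanSpace ℂ (Fin n),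
      (U w) a * conj ((U w) a) * ((U w) a * conj ((U w) a)) =
      ∑ i ∈ ({a, b} : Finset (Fin n)), ∑ j ∈ ({a, b} : Finset (Fin n)),
        ∑ k ∈ ({a, b} : Finset (Fin n)), ∑ l ∈ ({a, b} : Finset (Fin n)),
          (1/4 : ℂ) * (w i * conj (w j) * (w k * conj (w l))) := by
    intro w
    rw [rotU_coord_a a b hab]
    have hconj : conj ((w a + w b) / ((Real.sqrt 2 : ℝ) : ℂ)) =
        (conj (w a) + conj (w b)) / ((Real.sqrt 2 : ℝ) : ℂ) := by
      rw [map_div₀, map_add, Complex.conj_ofReal]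
    rw [hconj]
    simp only [Finset.sum_insert (by simp [hab] : a ∉ ({b} : Finset (Fin n))),
      Finset.sum_singleton]
    rw [div_mul_div_comm, sqrt2_sq]
    ring
  have h3 : Mom σ a a a a =
      ∑ i ∈ ({a, b} : Finset (Fin n)), ∑ j ∈ ({a, b} : Finset (Fin n)),
        ∑ k ∈ ({a, b} : Finset (Fin n)), ∑ l ∈ ({a, b} : Finset (Fin n)),
          (1/4 : ℂ) * Mom σ i j k l := by
    rw [← h1, integral_congr_ae (Filter.Eventually.of_forall h2)]
    rw [mom_sum_int hsphere _ _ (fun i _ => by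
      exact integrable_finset_sum _ (fun j _ => integrable_finset_sum _ (fun k _ =>
        integrable_finset_sum _ (fun l _ => ((mono_integrable hsphere i j k l).const_mul _)))))]
    refine Finset.sum_congr rfl fun i _ => ?_
    rw [mom_sum_int hsphere _ _ (fun j _ => by
      exact integrable_finset_sum _ (fun k _ =>
        integrable_finset_sum _ (fun l _ => ((mono_integrable hsphere i j k l).const_mul _))))]
    refine Finset.sum_congr rfl fun j _ => ?_
    rw [mom_sum_int hsphere _ _ (fun k _ => by
      exact integrable_finset_sum _ (fun l _ => ((mono_integrable hsphere i j k l).const_mul _)))]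
    refine Finset.sum_congr rfl fun k _ => ?_
    rw [mom_sum_int hsphere _ _ (fun l _ => ((mono_integrable hsphere i j k l).const_mul _))]
    refine Finset.sum_congr rfl fun l _ => ?_
    exact integral_const_mul _ _
  conv_lhs => rw [h3]
  simp only [Finset.sum_insert (by simp [hab] : a ∉ ({b} : Finset (Fin n))),
    Finset.sum_singleton]
  have v : ∀ i j k l : Fin n, ¬((i = j ∧ k = l) ∨ (i = l ∧ k = j)) → Mom σ i j k l = 0 :=
    fun i j k l h => mom_vanish hinv h
  rw [v a a a b (by simp [hab, Ne.symm hab]), v a a b a (by simp [hab, Ne.symm hab]),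
    v a b a a (by simp [hab, Ne.symm hab]), v a b a b (by simp [hab, Ne.symm hab]),
    v a b b b (by simp [hab, Ne.symm hab]), v b a a a (by simp [hab, Ne.symm hab]),
    v b a b a (by simp [hab, Ne.symm hab]), v b a b b (by simp [hab, Ne.symm hab]),
    v b b a b (by simp [hab, Ne.symm hab]), v b b b a (by simp [hab, Ne.symm hab])]
  rw [mom_perm1 a b, show Mom σ b a a b = Mom σ b b a a from mom_perm1 b a, mom_perm2 a b]
  ring


lemma mom_total (hsphere : σ (Metric.sphere (0 : EuclideanSpace ℂ (Fin n)) 1) = 1) :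
    ∑ i : Fin n, ∑ k : Fin n, Mom σ i i k k = 1 := by
  classical
  have h1 : ∑ i : Fin n, ∑ k : Fin n, Mom σ i i k k =
      ∫ w, ∑ i : Fin n, ∑ k : Fin n,
        w i * conj (w i) * (w k * conj (w k)) ∂σ := by
    rw [integral_finset_sum _ (fun i _ => integrable_finset_sum _
      (fun k _ => mono_integrable hsphere i i k k))]
    exact Finset.sum_congr rfl fun i _ =>
      (integral_finset_sum _ (fun k _ => mono_integrable hsphere i i k k)).symm
  rw [h1]
  have h2 : ∀ᵐ w ∂σ, ∑ i : Fin n, ∑ k : Fin n,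
      w i * conj (w i) * (w k * conj (w k)) = (1 : ℂ) := by
    filter_upwards [ae_norm_one hsphere] with w hw
    have hsum : ∑ i : Fin n, w i * conj (w i) = 1 := by
      have : ∀ i : Fin n, w i * conj (w i) = ((‖w i‖ ^ 2 : ℝ) : ℂ) := fun i => by
        rw [Complex.mul_conj, Complex.normSq_eq_norm_sq]
      rw [Finset.sum_congr rfl fun i _ => this i, ← Complex.ofReal_sum]
      have hn : ∑ i : Fin n, ‖w i‖ ^ 2 = 1 := by
        have := EuclideanSpace.norm_eq w
        rw [hw] at this
        have := (Real.sqrt_eq_one.mp this.symm)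
        exact this
      rw [hn, Complex.ofReal_one]
    calc ∑ i : Fin n, ∑ k : Fin n, w i * conj (w i) * (w k * conj (w k))
        = (∑ i : Fin n, w i * conj (w i)) * (∑ k : Fin n, w k * conj (w k)) := by
          rw [Finset.sum_mul_sum]
      _ = 1 := by rw [hsum, one_mul]
  rw [integral_congr_ae h2]
  simp


end Stmt4Aux

open Stmt4Aux

theorem stmt4 (n : ℕ) (hn : 1 ≤ n) (R : CurvatureForm n)
    (e : OrthonormalBasis (Fin n) ℂ (EuclideanSpace ℂ (Fin n)))
    (b : Fin n → ℝ) (hb : ∀ i, 0 ≤ b i)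
    (σ : Measure (EuclideanSpace ℂ (Fin n))) [IsProbabilityMeasure σ]
    (hsphere : σ (Metric.sphere (0 : EuclideanSpace ℂ (Fin n)) 1) = 1)
    (hinv : ∀ U : EuclideanSpace ℂ (Fin n) ≃ₗᵢ[ℂ] EuclideanSpace ℂ (Fin n),
      σ.map U = σ)
    (vb : EuclideanSpace ℂ (Fin n) → EuclideanSpace ℂ (Fin n))
    (hvb : ∀ w, vb w = ∑ i, ((b i : ℂ) * w i) • e i) :
    ∫ w, R.R (vb w) (vb w) (vb w) (vb w) ∂σ =
      (1 / ((n : ℂ) * ((n : ℂ) + 1))) *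
        ∑ i, ∑ k, (R.R (e i) (e i) (e k) (e k) + R.R (e i) (e k) (e k) (e i)) *
          (b i : ℂ) ^ 2 * (b k : ℂ) ^ 2 := by
  classical
  -- multilinearity over finite sums
  have Rsum1 : ∀ (f : Fin n → EuclideanSpace ℂ (Fin n)) Y Z W,
      R.R (∑ i, f i) Y Z W = ∑ i, R.R (f i) Y Z W := fun f Y Z W =>
    map_sum (AddMonoidHom.mk' (fun X => R.R X Y Z W)
      (fun x y => R.add_fst x y Y Z W)) f Finset.univ
  have Rsum2 : ∀ (X) (f : Fin n → EuclideanSpace ℂ (Fin n)) Z W,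
      R.R X (∑ i, f i) Z W = ∑ i, R.R X (f i) Z W := fun X f Z W =>
    map_sum (AddMonoidHom.mk' (fun Y => R.R X Y Z W)
      (fun x y => R.add_snd X x y Z W)) f Finset.univ
  have Rsum3 : ∀ (X Y) (f : Fin n → EuclideanSpace ℂ (Fin n)) W,
      R.R X Y (∑ i, f i) W = ∑ i, R.R X Y (f i) W := fun X Y f W =>
    map_sum (AddMonoidHom.mk' (fun Z => R.R X Y Z W)
      (fun x y => R.add_trd X Y x y W)) f Finset.univ
  have Rsum4 : ∀ (X Y Z) (f : Fin n → EuclideanSpace ℂ (Fin n)),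
      R.R X Y Z (∑ i, f i) = ∑ i, R.R X Y Z (f i) := fun X Y Z f =>
    map_sum (AddMonoidHom.mk' (fun W => R.R X Y Z W)
      (fun x y => R.add_fth X Y Z x y)) f Finset.univ
  have expand : ∀ w : EuclideanSpace ℂ (Fin n),
      R.R (vb w) (vb w) (vb w) (vb w) =
      ∑ i, ∑ j, ∑ k, ∑ l,
        ((b i : ℂ) * (b j : ℂ) * (b k : ℂ) * (b l : ℂ) * R.R (e i) (e j) (e k) (e l)) *
          (w i * conj (w j) * (w k * conj (w l))) := by
    intro w
    rw [hvb w, Rsum1]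
    refine Finset.sum_congr rfl fun i _ => ?_
    rw [R.smul_fst, Rsum2, Finset.mul_sum]
    refine Finset.sum_congr rfl fun j _ => ?_
    rw [R.smul_snd, Rsum3, Finset.mul_sum, Finset.mul_sum]
    refine Finset.sum_congr rfl fun k _ => ?_
    rw [R.smul_trd, Rsum4, Finset.mul_sum, Finset.mul_sum, Finset.mul_sum]
    refine Finset.sum_congr rfl fun l _ => ?_
    rw [R.smul_fth, map_mul, map_mul, Complex.conj_ofReal, Complex.conj_ofReal]
    ring
  -- the integral as a quadruple sum of moments
  have hsplit : ∫ w, R.R (vb w) (vb w) (vb w) (vb w) ∂σ =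
      ∑ i, ∑ j, ∑ k, ∑ l,
        ((b i : ℂ) * (b j : ℂ) * (b k : ℂ) * (b l : ℂ) * R.R (e i) (e j) (e k) (e l)) *
          Mom σ i j k l := by
    rw [integral_congr_ae (Filter.Eventually.of_forall expand)]
    rw [integral_finset_sum _ (fun i _ => integrable_finset_sum _ (fun j _ =>
      integrable_finset_sum _ (fun k _ => integrable_finset_sum _ (fun l _ =>
        (mono_integrable hsphere i j k l).const_mul _))))]
    refine Finset.sum_congr rfl fun i _ => ?_
    rw [integral_finset_sum _ (fun j _ => integrable_finset_sum _ (fun k _ =>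
      integrable_finset_sum _ (fun l _ => (mono_integrable hsphere i j k l).const_mul _)))]
    refine Finset.sum_congr rfl fun j _ => ?_
    rw [integral_finset_sum _ (fun k _ => integrable_finset_sum _ (fun l _ =>
      (mono_integrable hsphere i j k l).const_mul _))]
    refine Finset.sum_congr rfl fun k _ => ?_
    rw [integral_finset_sum _ (fun l _ => (mono_integrable hsphere i j k l).const_mul _)]
    exact Finset.sum_congr rfl fun l _ => integral_const_mul _ _
  -- the moment values
  have hn0 : ((n : ℂ) * ((n : ℂ) + 1)) ≠ 0 := by
    have h1 : (n : ℂ) ≠ 0 := Nat.cast_ne_zero.mpr (by omega)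
    have h2 : ((n : ℂ) + 1) ≠ 0 := by
      intro h
      have : (((n : ℕ) + 1 : ℕ) : ℂ) = 0 := by push_cast; linear_combination h
      exact Nat.cast_ne_zero.mpr (by omega) this
    exact mul_ne_zero h1 h2
  set i0 : Fin n := ⟨0, hn⟩ with hi0
  have hBall : ∀ i : Fin n, Mom σ i i i i = Mom σ i0 i0 i0 i0 := by
    intro i
    by_cases h : i = i0
    · rw [h]
    · have e1 := mom_rot hinv hsphere i0 i (fun hh => h hh.symm)
      have e2 := mom_rot hinv hsphere i i0 h
      have e3 := mom_perm2 (σ := σ) i0 i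
      linear_combination e2 - e1 + e3
  have hA : ∀ i k : Fin n, i ≠ k → Mom σ i i k k = Mom σ i0 i0 i0 i0 / 2 := by
    intro i k h
    have e1 := mom_rot hinv hsphere i k h
    rw [hBall i, hBall k] at e1
    linear_combination -e1
  have hBval : Mom σ i0 i0 i0 i0 = 2 / ((n : ℂ) * ((n : ℂ) + 1)) := by
    have htot := mom_total (σ := σ) hsphere
    have heval : ∀ i k : Fin n, Mom σ i i k k =
        Mom σ i0 i0 i0 i0 / 2 + (if i = k then Mom σ i0 i0 i0 i0 / 2 else 0) := by
      intro i k
      by_cases h : i = k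
      · rw [if_pos h, h, hBall k]; ring
      · rw [if_neg h, hA i k h]; ring
    rw [Finset.sum_congr rfl (fun i _ => Finset.sum_congr rfl fun k _ => heval i k)] at htot
    simp only [Finset.sum_add_distrib, Finset.sum_const, Finset.card_univ, Fintype.card_fin,
      Finset.sum_ite_eq, Finset.mem_univ, if_pos] at htot
    simp only [nsmul_eq_mul] at htot
    rw [eq_div_iff hn0]
    linear_combination 2 * htot
  rw [hsplit]
  -- reorder and evaluate
  have hswap : ∀ i : Fin n, ∑ j : Fin n, ∑ k : Fin n, ∑ l : Fin n,
      ((b i : ℂ) * (b j : ℂ) * (b k : ℂ) * (b l : ℂ) * R.R (e i) (e j) (e k) (e l)) *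
        Mom σ i j k l =
      ∑ k : Fin n, ∑ j : Fin n, ∑ l : Fin n,
      ((b i : ℂ) * (b j : ℂ) * (b k : ℂ) * (b l : ℂ) * R.R (e i) (e j) (e k) (e l)) *
        Mom σ i j k l := fun i => Finset.sum_comm
  rw [Finset.sum_congr rfl fun i _ => hswap i, Finset.mul_sum]
  refine Finset.sum_congr rfl fun i _ => ?_
  rw [Finset.mul_sum]
  refine Finset.sum_congr rfl fun k _ => ?_
  -- now fixed i, k
  by_cases hik : i = k
  · subst hik
    have houter : ∀ j : Fin n, j ≠ i → ∑ l : Fin n,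
        ((b i : ℂ) * (b j : ℂ) * (b i : ℂ) * (b l : ℂ) * R.R (e i) (e j) (e i) (e l)) *
          Mom σ i j i l = 0 := by
      intro j hj
      refine Finset.sum_eq_zero fun l _ => ?_
      rw [mom_vanish hinv (by
        rintro (⟨h1, h2⟩ | ⟨h1, h2⟩)
        · exact hj h1.symm
        · exact hj h2.symm), mul_zero]
    rw [Finset.sum_eq_single i (fun j _ hj => houter j hj) (fun h => absurd (Finset.mem_univ i) h)]
    have hinner : ∀ l : Fin n, l ≠ i →
        ((b i : ℂ) * (b i : ℂ) * (b i : ℂ) * (b l : ℂ) * R.R (e i) (e i) (e i) (e l)) *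
          Mom σ i i i l = 0 := by
      intro l hl
      rw [mom_vanish hinv (by
        rintro (⟨h1, h2⟩ | ⟨h1, h2⟩)
        · exact hl h2.symm
        · exact hl h1.symm), mul_zero]
    rw [Finset.sum_eq_single i (fun l _ hl => hinner l hl) (fun h => absurd (Finset.mem_univ i) h)]
    rw [hBall i, hBval]
    field_simp
    ring
  · -- i ≠ k
    have hzero : ∀ j : Fin n, j ∉ ({i, k} : Finset (Fin n)) → ∑ l : Fin n,
        ((b i : ℂ) * (b j : ℂ) * (b k : ℂ) * (b l : ℂ) * R.R (e i) (e j) (e k) (e l)) *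
          Mom σ i j k l = 0 := by
      intro j hj
      simp only [Finset.mem_insert, Finset.mem_singleton, not_or] at hj
      refine Finset.sum_eq_zero fun l _ => ?_
      rw [mom_vanish hinv (by
        rintro (⟨h1, h2⟩ | ⟨h1, h2⟩)
        · exact hj.1 h1.symm
        · exact hj.2 h2.symm), mul_zero]
    rw [show (Finset.univ : Finset (Fin n)) = Finset.univ from rfl,
      ← Finset.sum_subset (Finset.subset_univ ({i, k} : Finset (Fin n)))
        (fun j _ hj => hzero j hj),
      Finset.sum_pair hik]
    have hji : ∀ l : Fin n, l ≠ k →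
        ((b i : ℂ) * (b i : ℂ) * (b k : ℂ) * (b l : ℂ) * R.R (e i) (e i) (e k) (e l)) *
          Mom σ i i k l = 0 := by
      intro l hl
      rw [mom_vanish hinv (by
        rintro (⟨h1, h2⟩ | ⟨h1, h2⟩)
        · exact hl h2.symm
        · exact hik h2.symm), mul_zero]
    have hjk : ∀ l : Fin n, l ≠ i →
        ((b i : ℂ) * (b k : ℂ) * (b k : ℂ) * (b l : ℂ) * R.R (e i) (e k) (e k) (e l)) *
          Mom σ i k k l = 0 := by
      intro l hl
      rw [mom_vanish hinv (by
        rintro (⟨h1, h2⟩ | ⟨h1, h2⟩)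
        · exact hik h1
        · exact hl h1.symm), mul_zero]
    rw [Finset.sum_eq_single k (fun l _ hl => hji l hl) (fun h => absurd (Finset.mem_univ k) h),
      Finset.sum_eq_single i (fun l _ hl => hjk l hl) (fun h => absurd (Finset.mem_univ i) h)]
    rw [mom_perm1 i k, hA i k hik, hBval]
    field_simp
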